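/- Let a ∈ GL_d(ℝ) and let Ω ⊂ ℝᵈ be measurable with ⋃_{j∈ℤ} aʲΩ = ℝᵈ up to a null set and μ(aʲΩ ∩ aᵏΩ) = 0 for j ≠ k. If {g_k : k ∈ ℤ} is a Riesz basis for K_Ω = {f ∈ L²(ℝᵈ) : supp f ⊆ Ω} with bounds A, B, then {D_a^j g_k : j, k ∈ ℤ} is a Riesz basis for L²(ℝᵈ) with the same bounds, where (D_a g)(x) = |det a|^{1/2} g(ax). -/

import Mathlib

open MeasureTheory Filter
noncomputable section

/-- A family `f : ι → H` is a Riesz basis of a (closed) subset `K` of a Hilbert space `H`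
with bounds `A ≤ B`. -/
def IsRieszBasisOf {H : Type*} [NormedAddCommGroup H] [InnerProductSpace ℂ H]
    {ι : Type*} (K : Set H) (f : ι → H) (A B : ℝ) : Prop :=
  (∀ k, f k ∈ K) ∧ K ⊆ closure (Submodule.span ℂ (Set.range f) : Set H) ∧
    ∀ c : ι →₀ ℂ,
      A * ∑ k ∈ c.support, ‖c k‖ ^ 2 ≤ ‖∑ k ∈ c.support, c k • f k‖ ^ 2 ∧
        ‖∑ k ∈ c.support, c k • f k‖ ^ 2 ≤ B * ∑ k ∈ c.support, ‖c k‖ ^ 2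

/-- `K_Ω`: the subspace of `L²(ℝᵈ)` of functions supported in `Ω`. -/
def KOmega {d : ℕ} (Ω : Set (Fin d → ℝ)) :
    Set (Lp ℂ 2 (volume : Measure (Fin d → ℝ))) :=
  {f | ∀ᵐ x ∂(volume : Measure (Fin d → ℝ)), x ∉ Ω → (f : (Fin d → ℝ) → ℂ) x = 0}

/-- The `j`-th power of the unitary dilation: `(D_a^j g)(x) = |det aʲ|^{1/2} g(aʲx)`. -/
def dilPow {d : ℕ} (a : (Matrix (Fin d) (Fin d) ℝ)ˣ) (j : ℤ)
    (g : (Fin d → ℝ) → ℂ) (x : Fin d → ℝ) : ℂ :=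
  (|((a ^ j : (Matrix (Fin d) (Fin d) ℝ)ˣ) : Matrix (Fin d) (Fin d) ℝ).det| ^
      ((1 : ℝ) / 2) : ℝ) •
    g (((a ^ j : (Matrix (Fin d) (Fin d) ℝ)ˣ) : Matrix (Fin d) (Fin d) ℝ).mulVec x)

section DilAux
open Matrix Set ENNReal
variable {d : ℕ}

abbrev dil (M : Matrix (Fin d) (Fin d) ℝ) (g : (Fin d → ℝ) → ℂ) (x : Fin d → ℝ) : ℂ :=
  (|M.det| ^ ((1:ℝ)/2) : ℝ) • g (M.mulVec x)

lemma mulVec_measurable (M : Matrix (Fin d) (Fin d) ℝ) : Measurable (M.mulVec) := by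
  have : Continuous (M.mulVecLin) := LinearMap.continuous_on_pi _
  exact this.measurable

lemma map_mulVec_volume (M : Matrix (Fin d) (Fin d) ℝ) (hM : M.det ≠ 0) :
    Measure.map M.mulVec (volume : Measure (Fin d → ℝ))
      = ENNReal.ofReal |M.det⁻¹| • volume := by
  have h := Real.map_matrix_volume_pi_eq_smul_volume_pi (M := M) hM
  have : (Matrix.toLin' M : (Fin d → ℝ) → (Fin d → ℝ)) = M.mulVec := by
    funext x; exact Matrix.toLin'_apply M x
  rwa [this] at h

lemma smul_ac (c : ℝ≥0∞) :
    (c • (volume : Measure (Fin d → ℝ))) ≪ volume := by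
  intro s hs
  simp [Measure.smul_apply, hs]

lemma qmp_mulVec (M : Matrix (Fin d) (Fin d) ℝ) (hM : M.det ≠ 0) :
    Measure.QuasiMeasurePreserving M.mulVec
      (volume : Measure (Fin d → ℝ)) volume :=
  ⟨mulVec_measurable M, by rw [map_mulVec_volume M hM]; exact smul_ac _⟩

lemma lintegral_comp_mulVec (M : Matrix (Fin d) (Fin d) ℝ) (hM : M.det ≠ 0)
    {f : (Fin d → ℝ) → ℝ≥0∞} (hf : AEMeasurable f (volume : Measure (Fin d → ℝ))) :
    ∫⁻ x, f (M.mulVec x) = ENNReal.ofReal |M.det⁻¹| * ∫⁻ y, f y := by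
  rw [← lintegral_map' (hf.mono_ac (by rw [map_mulVec_volume M hM]; exact smul_ac _))
    (mulVec_measurable M).aemeasurable, map_mulVec_volume M hM, lintegral_smul_measure, smul_eq_mul]

lemma det_pair {M N : Matrix (Fin d) (Fin d) ℝ} (h1 : M * N = 1) :
    M.det * N.det = 1 := by rw [← Matrix.det_mul, h1, Matrix.det_one]

lemma det_ne_zero {M N : Matrix (Fin d) (Fin d) ℝ} (h1 : M * N = 1) : M.det ≠ 0 :=
  left_ne_zero_of_mul_eq_one (det_pair h1)

lemma eLpNorm_dil {M N : Matrix (Fin d) (Fin d) ℝ} (h1 : M * N = 1)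
    {g : (Fin d → ℝ) → ℂ} (hg : AEStronglyMeasurable g (volume : Measure (Fin d → ℝ))) :
    eLpNorm (dil M g) 2 volume = eLpNorm g 2 volume := by
  have hM : M.det ≠ 0 := det_ne_zero h1
  have habs : (0:ℝ) < |M.det| := abs_pos.2 hM
  rw [eLpNorm_eq_lintegral_rpow_enorm_toReal (by norm_num) (by norm_num),
    eLpNorm_eq_lintegral_rpow_enorm_toReal (by norm_num) (by norm_num)]
  congr 1
  have h2 : (2:ℝ≥0∞).toReal = (2:ℝ) := by simp
  have hga : AEMeasurable (fun x => ((‖g (M.mulVec x)‖₊ : ℝ≥0∞)) ^ (2:ℝ)) volume :=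
    ((hg.comp_quasiMeasurePreserving (qmp_mulVec M hM)).enorm).pow_const _
  calc ∫⁻ x, (‖dil M g x‖₊ : ℝ≥0∞) ^ (2:ℝ≥0∞).toReal
      = ∫⁻ x, (ENNReal.ofReal (|M.det| ^ ((1:ℝ)/2)))^(2:ℝ) *
          (‖g (M.mulVec x)‖₊ : ℝ≥0∞) ^ (2:ℝ) := by
        congr 1; funext x
        rw [h2]
        show ((‖(_ • _ : ℂ)‖₊ : ℝ≥0∞)) ^ (2:ℝ) = _
        rw [nnnorm_smul, ENNReal.coe_mul, ENNReal.mul_rpow_of_nonneg _ _ (by norm_num),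
          ← enorm_eq_nnnorm, Real.enorm_eq_ofReal (Real.rpow_nonneg (abs_nonneg _) _)]
    _ = (ENNReal.ofReal (|M.det| ^ ((1:ℝ)/2)))^(2:ℝ) * ∫⁻ x,
          (‖g (M.mulVec x)‖₊ : ℝ≥0∞) ^ (2:ℝ) := lintegral_const_mul'' _ hga
    _ = ∫⁻ y, (‖g y‖₊ : ℝ≥0∞) ^ (2:ℝ≥0∞).toReal := by
        rw [lintegral_comp_mulVec M hM (f := fun y => (‖g y‖₊ : ℝ≥0∞) ^ (2:ℝ))
          (hg.enorm.pow_const _), ← mul_assoc]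
        have : (ENNReal.ofReal (|M.det| ^ ((1:ℝ)/2)))^(2:ℝ) *
            ENNReal.ofReal |M.det⁻¹| = 1 := by
          rw [ENNReal.ofReal_rpow_of_nonneg (Real.rpow_nonneg (abs_nonneg _) _) (by norm_num),
            ]
          have hx : (|M.det| ^ ((1:ℝ)/2)) ^ (2:ℝ) = |M.det| := by
            rw [← Real.rpow_mul (abs_nonneg _)]; norm_num
          rw [hx, abs_inv, ← ENNReal.ofReal_mul (abs_nonneg _), mul_inv_cancel₀ habs.ne',
            ENNReal.ofReal_one]
        rw [this, one_mul, h2]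

lemma memℒp_dil {M N : Matrix (Fin d) (Fin d) ℝ} (h1 : M * N = 1)
    {g : (Fin d → ℝ) → ℂ} (hg : MemLp g 2 (volume : Measure (Fin d → ℝ))) :
    MemLp (dil M g) 2 (volume : Measure (Fin d → ℝ)) :=
  ⟨by have := (hg.1.comp_quasiMeasurePreserving (qmp_mulVec M (det_ne_zero h1))).const_smul
        (|M.det| ^ ((1:ℝ)/2) : ℝ); exact this,
    by rw [eLpNorm_dil h1 hg.1]; exact hg.2⟩

lemma dil_dil {M N : Matrix (Fin d) (Fin d) ℝ} (h1 : M * N = 1) (h2 : N * M = 1)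
    (g : (Fin d → ℝ) → ℂ) : dil M (dil N g) = g := by
  funext x
  show (|M.det| ^ ((1:ℝ)/2) : ℝ) • ((|N.det| ^ ((1:ℝ)/2) : ℝ) • g (N.mulVec (M.mulVec x))) = g x
  rw [Matrix.mulVec_mulVec, h2, Matrix.one_mulVec, smul_smul, ← Real.mul_rpow (abs_nonneg _)
    (abs_nonneg _), ← abs_mul, det_pair h1, abs_one, Real.one_rpow, one_smul]

/-- Change of variables for the pointwise inner products. -/
lemma integral_inner_dil {M N : Matrix (Fin d) (Fin d) ℝ} (h1 : M * N = 1)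
    {u v : (Fin d → ℝ) → ℂ} (hu : AEStronglyMeasurable u (volume : Measure (Fin d → ℝ)))
    (hv : AEStronglyMeasurable v (volume : Measure (Fin d → ℝ))) :
    ∫ x, (inner ℂ (dil M u x) (dil M v x) : ℂ) = ∫ x, (inner ℂ (u x) (v x) : ℂ) := by
  have hM : M.det ≠ 0 := det_ne_zero h1
  have habs : (0:ℝ) < |M.det| := abs_pos.2 hM
  set r : ℝ := |M.det| ^ ((1:ℝ)/2) with hr
  have hF : AEStronglyMeasurable (fun y => (inner ℂ (u y) (v y) : ℂ)) volume := by
    exact hv.mul (RCLike.continuous_conj.comp_aestronglyMeasurable hu)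
  have hpt : (fun x => (inner ℂ (dil M u x) (dil M v x) : ℂ))
      = fun x => ((r^2 : ℝ) : ℂ) * (inner ℂ (u (M.mulVec x)) (v (M.mulVec x)) : ℂ) := by
    funext x
    simp only [RCLike.inner_apply, dil]
    rw [Complex.real_smul, Complex.real_smul, _root_.map_mul, Complex.conj_ofReal]
    push_cast
    ring
  rw [hpt]
  have hcomp : ∫ x, (inner ℂ (u (M.mulVec x)) (v (M.mulVec x)) : ℂ)
      = |M.det⁻¹| • ∫ y, (inner ℂ (u y) (v y) : ℂ) := by
    have := integral_map (μ := (volume : Measure (Fin d → ℝ)))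
      (mulVec_measurable M).aemeasurable
      (f := fun y => (inner ℂ (u y) (v y) : ℂ))
      (hF.mono_ac (by rw [map_mulVec_volume M hM]; exact smul_ac _))
    rw [map_mulVec_volume M hM, integral_smul_measure,
      ENNReal.toReal_ofReal (abs_nonneg _)] at this
    exact this.symm
  rw [integral_const_mul, hcomp, Complex.real_smul, ← mul_assoc]
  norm_cast
  have : r^2 = |M.det| := by
    rw [hr, sq, ← Real.rpow_add habs]; norm_num
  rw [this, abs_inv, mul_inv_cancel₀ habs.ne', Complex.ofReal_one, one_mul]

/-- Pull back an a.e. property through `mulVec`. -/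
lemma ae_comp_mulVec {M : Matrix (Fin d) (Fin d) ℝ} (hM : M.det ≠ 0)
    {P : (Fin d → ℝ) → Prop} (h : ∀ᵐ y ∂(volume : Measure (Fin d → ℝ)), P y) :
    ∀ᵐ x ∂(volume : Measure (Fin d → ℝ)), P (M.mulVec x) :=
  (qmp_mulVec M hM).tendsto_ae.eventually h

lemma preimage_eq_image {M N : Matrix (Fin d) (Fin d) ℝ} (h1 : M * N = 1) (h2 : N * M = 1)
    (Ω : Set (Fin d → ℝ)) : M.mulVec ⁻¹' Ω = N.mulVec '' Ω := by
  ext x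
  constructor
  · intro hx
    exact ⟨M.mulVec x, hx, by rw [Matrix.mulVec_mulVec, h2, Matrix.one_mulVec]⟩
  · rintro ⟨y, hy, rfl⟩
    show M.mulVec (N.mulVec y) ∈ Ω
    rwa [Matrix.mulVec_mulVec, h1, Matrix.one_mulVec]

/-- Norm of a finite sum of pairwise-orthogonal vectors. -/
lemma norm_sum_sq_orth {E : Type*} [NormedAddCommGroup E] [InnerProductSpace ℂ E]
    {ι : Type*} (s : Finset ι) (u : ι → E)
    (h : ∀ i ∈ s, ∀ j ∈ s, i ≠ j → (inner ℂ (u i) (u j) : ℂ) = 0) :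
    ‖∑ i ∈ s, u i‖ ^ 2 = ∑ i ∈ s, ‖u i‖ ^ 2 := by
  have : (inner ℂ (∑ i ∈ s, u i) (∑ j ∈ s, u j) : ℂ) = ∑ i ∈ s, inner ℂ (u i) (u i) := by
    rw [sum_inner]
    refine Finset.sum_congr rfl fun i hi => ?_
    rw [inner_sum]
    exact Finset.sum_eq_single_of_mem i hi fun j hj hne => h i hi j hj (Ne.symm hne)
  calc ‖∑ i ∈ s, u i‖ ^ 2 = RCLike.re (inner ℂ (∑ i ∈ s, u i) (∑ j ∈ s, u j) : ℂ) :=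
        (inner_self_eq_norm_sq _).symm
    _ = ∑ i ∈ s, RCLike.re (inner ℂ (u i) (u i) : ℂ) := by rw [this, map_sum]
    _ = ∑ i ∈ s, ‖u i‖ ^ 2 := Finset.sum_congr rfl fun i _ => inner_self_eq_norm_sq _

/-- coeFn of a finite sum in Lp. -/
lemma coeFn_finset_sum {α : Type*} [MeasurableSpace α] {μ : Measure α} {ι : Type*}
    (s : Finset ι) (F : ι → Lp ℂ 2 μ) (f : ι → α → ℂ) (hf : ∀ i ∈ s, ⇑(F i) =ᵐ[μ] f i) :
    ⇑(∑ i ∈ s, F i) =ᵐ[μ] fun x => ∑ i ∈ s, f i x := by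
  classical
  induction s using Finset.induction with
  | empty => simp only [Finset.sum_empty]; exact Lp.coeFn_zero ℂ 2 μ
  | insert a t hni ih =>
    rw [Finset.sum_insert hni]
    filter_upwards [Lp.coeFn_add (F a) (∑ i ∈ t, F i), hf a (Finset.mem_insert_self a t),
      ih fun i hi => hf i (Finset.mem_insert_of_mem hi)] with x hx ha hs
    rw [hx]
    simp only [Pi.add_apply, ha, hs, Finset.sum_insert hni]

end DilAux

/-- If `{aʲΩ}_{j∈ℤ}` tiles `ℝᵈ` (a.e. covering with null pairwise overlaps) and
`{g_k}` is a Riesz basis of `K_Ω` with bounds `A, B`, then `{D_a^j g_k}` is a Riesz basis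
of `L²(ℝᵈ)` with the same bounds. -/
theorem riesz_basis_dilations {d : ℕ} (a : (Matrix (Fin d) (Fin d) ℝ)ˣ)
    (Ω : Set (Fin d → ℝ)) (hΩm : MeasurableSet Ω)
    (hcover : volume ((⋃ j : ℤ,
      ((a ^ j : (Matrix (Fin d) (Fin d) ℝ)ˣ) : Matrix (Fin d) (Fin d) ℝ).mulVec '' Ω)ᶜ) = 0)
    (hdisj : ∀ j k : ℤ, j ≠ k →
      volume ((((a ^ j : (Matrix (Fin d) (Fin d) ℝ)ˣ) : Matrix (Fin d) (Fin d) ℝ).mulVec '' Ω) ∩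
        (((a ^ k : (Matrix (Fin d) (Fin d) ℝ)ˣ) : Matrix (Fin d) (Fin d) ℝ).mulVec '' Ω)) = 0)
    (g : ℤ → (Fin d → ℝ) → ℂ)
    (hg : ∀ k, MemLp (g k) 2 (volume : Measure (Fin d → ℝ)))
    (hDg : ∀ jk : ℤ × ℤ, MemLp (dilPow a jk.1 (g jk.2)) 2 (volume : Measure (Fin d → ℝ)))
    (A B : ℝ) (hA : 0 < A) (hAB : A ≤ B)
    (hRB : IsRieszBasisOf (KOmega Ω) (fun k : ℤ => MemLp.toLp _ (hg k)) A B) :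
    IsRieszBasisOf (Set.univ : Set (Lp ℂ 2 (volume : Measure (Fin d → ℝ))))
      (fun jk : ℤ × ℤ => MemLp.toLp _ (hDg jk)) A B := by
  classical
  have hpair : ∀ j : ℤ, ((a ^ j : (Matrix (Fin d) (Fin d) ℝ)ˣ) : Matrix (Fin d) (Fin d) ℝ) *
      ((a ^ (-j) : (Matrix (Fin d) (Fin d) ℝ)ˣ) : Matrix (Fin d) (Fin d) ℝ) = 1 := by
    intro j
    rw [← Units.val_mul, ← zpow_add, add_neg_cancel, zpow_zero, Units.val_one]
  have hpair' : ∀ j : ℤ, ((a ^ (-j) : (Matrix (Fin d) (Fin d) ℝ)ˣ) : Matrix (Fin d) (Fin d) ℝ) *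
      ((a ^ j : (Matrix (Fin d) (Fin d) ℝ)ˣ) : Matrix (Fin d) (Fin d) ℝ) = 1 := by
    intro j; have := hpair (-j); rwa [neg_neg] at this
  have hdet : ∀ j : ℤ,
      ((a ^ j : (Matrix (Fin d) (Fin d) ℝ)ˣ) : Matrix (Fin d) (Fin d) ℝ).det ≠ 0 :=
    fun j => det_ne_zero (hpair j)
  have hdileq : ∀ (j : ℤ) (u : (Fin d → ℝ) → ℂ),
      dilPow a j u = dil ((a ^ j : (Matrix (Fin d) (Fin d) ℝ)ˣ) : Matrix (Fin d) (Fin d) ℝ) u :=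
    fun _ _ => rfl
  have hsupp : ∀ k : ℤ, ∀ᵐ x ∂(volume : Measure (Fin d → ℝ)), x ∉ Ω → g k x = 0 := by
    intro k
    filter_upwards [hRB.1 k, (hg k).coeFn_toLp] with x h1 h2 hx
    rw [← h2]; exact h1 hx
  have hnullpre : ∀ j k : ℤ, j ≠ k → volume
      ((((a ^ j : (Matrix (Fin d) (Fin d) ℝ)ˣ) : Matrix (Fin d) (Fin d) ℝ).mulVec ⁻¹' Ω) ∩
       (((a ^ k : (Matrix (Fin d) (Fin d) ℝ)ˣ) : Matrix (Fin d) (Fin d) ℝ).mulVec ⁻¹' Ω)) = 0 := by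
    intro j k hjk
    rw [preimage_eq_image (hpair j) (hpair' j), preimage_eq_image (hpair k) (hpair' k)]
    exact hdisj (-j) (-k) fun h => hjk (neg_injective h)
  have hwmem : ∀ (s : Finset ℤ) (co : ℤ → ℂ),
      MemLp (fun x => ∑ k ∈ s, co k • g k x) 2 (volume : Measure (Fin d → ℝ)) :=
    fun s co => by
    have h := memLp_finset_sum' s fun k (_ : k ∈ s) => ((hg k).const_smul (co k))
    have heq : (∑ i ∈ s, co i • g i) = fun x => ∑ k ∈ s, co k • g k x := by
      funext x; simp [Finset.sum_apply]
    rwa [heq] at h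
  have hwsupp : ∀ (s : Finset ℤ) (co : ℤ → ℂ), ∀ᵐ x ∂(volume : Measure (Fin d → ℝ)),
      x ∉ Ω → (∑ k ∈ s, co k • g k x) = 0 := by
    intro s co
    have hae : ∀ᵐ x ∂(volume : Measure (Fin d → ℝ)), ∀ k ∈ (s : Set ℤ), x ∉ Ω → g k x = 0 :=
      (ae_ball_iff s.countable_toSet).mpr fun k _ => hsupp k
    filter_upwards [hae] with x hx hxΩ
    exact Finset.sum_eq_zero fun k hk => by rw [hx k hk hxΩ, smul_zero]
  -- coeFn of row sums of dilations
  have hrowD : ∀ (j : ℤ) (s : Finset ℤ) (co : ℤ → ℂ),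
      ⇑(∑ k ∈ s, co k • (hDg (j, k)).toLp (dilPow a j (g k)))
        =ᵐ[(volume : Measure (Fin d → ℝ))]
      dil ((a ^ j : (Matrix (Fin d) (Fin d) ℝ)ˣ) : Matrix (Fin d) (Fin d) ℝ)
        (fun x => ∑ k ∈ s, co k • g k x) := by
    intro j s co
    have h1 := coeFn_finset_sum (μ := (volume : Measure (Fin d → ℝ))) s
      (fun k => co k • (hDg (j, k)).toLp (dilPow a j (g k)))
      (fun k x => co k • dilPow a j (g k) x) (fun k _ =>
        (Lp.coeFn_smul (co k) _).trans ((hDg (j, k)).coeFn_toLp.mono fun x hx => by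
          rw [Pi.smul_apply, hx]))
    refine h1.trans (Eventually.of_forall fun x => ?_)
    simp only [dilPow, dil, Finset.smul_sum]
    exact Finset.sum_congr rfl fun k _ => smul_comm _ _ _
  have hrowG : ∀ (s : Finset ℤ) (co : ℤ → ℂ),
      ⇑(∑ k ∈ s, co k • (hg k).toLp (g k)) =ᵐ[(volume : Measure (Fin d → ℝ))]
        fun x => ∑ k ∈ s, co k • g k x :=
    fun s co => coeFn_finset_sum s _ _ fun k _ =>
      (Lp.coeFn_smul (co k) _).trans ((hg k).coeFn_toLp.mono fun x hx => by
        rw [Pi.smul_apply, hx])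
  have hrowNorm : ∀ (j : ℤ) (s : Finset ℤ) (co : ℤ → ℂ),
      ‖∑ k ∈ s, co k • (hDg (j, k)).toLp (dilPow a j (g k))‖
        = ‖∑ k ∈ s, co k • (hg k).toLp (g k)‖ := by
    intro j s co
    rw [Lp.norm_def, Lp.norm_def, eLpNorm_congr_ae (hrowD j s co),
      eLpNorm_congr_ae (hrowG s co), eLpNorm_dil (hpair j) (hwmem s co).1]
  have hrowOrth : ∀ (j j' : ℤ), j ≠ j' → ∀ (s s' : Finset ℤ) (co co' : ℤ → ℂ),
      (inner ℂ (∑ k ∈ s, co k • (hDg (j, k)).toLp (dilPow a j (g k)))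
        (∑ k ∈ s', co' k • (hDg (j', k)).toLp (dilPow a j' (g k))) : ℂ) = 0 := by
    intro j j' hjj s s' co co'
    rw [L2.inner_def]
    have hae : (fun x => (inner ℂ ((⇑(∑ k ∈ s, co k • (hDg (j, k)).toLp (dilPow a j (g k)))) x)
          ((⇑(∑ k ∈ s', co' k • (hDg (j', k)).toLp (dilPow a j' (g k)))) x) : ℂ))
        =ᵐ[(volume : Measure (Fin d → ℝ))] 0 := by
      filter_upwards [hrowD j s co, hrowD j' s' co',
        ae_comp_mulVec (hdet j) (hwsupp s co), ae_comp_mulVec (hdet j') (hwsupp s' co'),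
        measure_eq_zero_iff_ae_notMem.mp (hnullpre j j' hjj)] with x e1 e2 e3 e4 e5
      rw [e1, e2]
      by_cases hx : ((a ^ j : (Matrix (Fin d) (Fin d) ℝ)ˣ) : Matrix (Fin d) (Fin d) ℝ).mulVec x ∈ Ω
      · have hx' : ((a ^ j' : (Matrix (Fin d) (Fin d) ℝ)ˣ) : Matrix (Fin d) (Fin d) ℝ).mulVec x ∉ Ω :=
          fun h => e5 ⟨hx, h⟩
        have hz : dil ((a ^ j' : (Matrix (Fin d) (Fin d) ℝ)ˣ) : Matrix (Fin d) (Fin d) ℝ)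
            (fun y => ∑ k ∈ s', co' k • g k y) x = 0 := by
          simp only [dil, e4 hx', smul_zero]
        rw [hz, inner_zero_right]
        rfl
      · have hz : dil ((a ^ j : (Matrix (Fin d) (Fin d) ℝ)ˣ) : Matrix (Fin d) (Fin d) ℝ)
            (fun y => ∑ k ∈ s, co k • g k y) x = 0 := by
          simp only [dil, e3 hx, smul_zero]
        rw [hz, inner_zero_left]
        rfl
    rw [integral_congr_ae hae]
    simp
  refine ⟨fun _ => trivial, ?_, ?_⟩
  · -- completeness
    intro f _
    suffices htop : (Submodule.span ℂ (Set.range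
        (fun jk : ℤ × ℤ => MemLp.toLp _ (hDg jk)))).topologicalClosure = ⊤ by
      have : closure ((Submodule.span ℂ (Set.range
          (fun jk : ℤ × ℤ => MemLp.toLp _ (hDg jk)))) :
          Set (Lp ℂ 2 (volume : Measure (Fin d → ℝ)))) = Set.univ := by
        rw [← Submodule.topologicalClosure_coe, htop]
        rfl
      rw [this]
      trivial
    rw [Submodule.topologicalClosure_eq_top_iff, Submodule.eq_bot_iff]
    intro w hw
    have hw0 : ∀ p : ℤ × ℤ, (inner ℂ w (MemLp.toLp _ (hDg p)) : ℂ) = 0 := by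
      intro p
      have h1 := (Submodule.mem_orthogonal _ w).mp hw _
        (Submodule.subset_span (Set.mem_range_self p))
      rw [← inner_conj_symm, h1, map_zero]
    -- for each j, the pull-back of w vanishes a.e. on Ω
    have hWj : ∀ j : ℤ, ∀ᵐ y ∂(volume : Measure (Fin d → ℝ)), y ∈ Ω →
        dil ((a ^ (-j) : (Matrix (Fin d) (Fin d) ℝ)ˣ) : Matrix (Fin d) (Fin d) ℝ) (⇑w) y = 0 := by
      intro j
      have hwj : MemLp (dil ((a ^ (-j) : (Matrix (Fin d) (Fin d) ℝ)ˣ) :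
          Matrix (Fin d) (Fin d) ℝ) (⇑w)) 2 (volume : Measure (Fin d → ℝ)) :=
        memℒp_dil (hpair' j) (Lp.memLp w)
      -- Wj is orthogonal to every g k
      have horthk : ∀ k : ℤ, (inner ℂ (hwj.toLp _) (MemLp.toLp _ (hg k)) : ℂ) = 0 := by
        intro k
        rw [L2.inner_def]
        have h2 : ∫ x, (inner ℂ ((⇑(hwj.toLp _)) x) ((⇑(MemLp.toLp _ (hg k))) x) : ℂ)
            = ∫ x, (inner ℂ (dil ((a ^ (-j) : (Matrix (Fin d) (Fin d) ℝ)ˣ) :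
                Matrix (Fin d) (Fin d) ℝ) (⇑w) x) (g k x) : ℂ) :=
          integral_congr_ae (by
            filter_upwards [hwj.coeFn_toLp, (hg k).coeFn_toLp] with x e1 e2
            rw [e1, e2])
        rw [h2, ← integral_inner_dil (hpair j) hwj.1 (hg k).1,
          dil_dil (hpair j) (hpair' j)]
        have h3 : ∫ x, (inner ℂ ((⇑w) x) (dil ((a ^ j : (Matrix (Fin d) (Fin d) ℝ)ˣ) :
              Matrix (Fin d) (Fin d) ℝ) (g k) x) : ℂ)
            = inner ℂ w (MemLp.toLp _ (hDg (j, k))) := by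
          rw [L2.inner_def]
          exact integral_congr_ae (by
            filter_upwards [(hDg (j, k)).coeFn_toLp] with x e1
            rw [e1]; rfl) |>.symm
        rw [h3]
        exact hw0 (j, k)
      -- hence orthogonal to the closure of the span, which contains K_Ω
      have horthcl : ∀ v ∈ closure ((Submodule.span ℂ (Set.range
          (fun k : ℤ => MemLp.toLp _ (hg k)))) : Set (Lp ℂ 2 (volume : Measure (Fin d → ℝ)))),
          (inner ℂ (hwj.toLp _) v : ℂ) = 0 := by
        intro v hv
        have hcl : IsClosed {v : Lp ℂ 2 (volume : Measure (Fin d → ℝ)) |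
            (inner ℂ (hwj.toLp _) v : ℂ) = 0} :=
          isClosed_eq (Continuous.inner continuous_const continuous_id) continuous_const
        refine closure_minimal ?_ hcl hv
        intro v hv'
        refine Submodule.span_induction ?_ ?_ ?_ ?_ hv'
        · rintro _ ⟨k, rfl⟩; exact horthk k
        · exact inner_zero_right _
        · intro u1 u2 _ _ e1 e2
          simp only [Set.mem_setOf_eq] at e1 e2 ⊢
          rw [inner_add_right, e1, e2, add_zero]
        · intro r u _ e1
          simp only [Set.mem_setOf_eq] at e1 ⊢
          rw [inner_smul_right, e1, mul_zero]
      -- test against the truncation of wj to Ω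
      have hindm : MemLp (Ω.indicator (dil ((a ^ (-j) : (Matrix (Fin d) (Fin d) ℝ)ˣ) :
          Matrix (Fin d) (Fin d) ℝ) (⇑w))) 2 (volume : Measure (Fin d → ℝ)) :=
        hwj.indicator hΩm
      have hmem : hindm.toLp _ ∈ KOmega Ω := by
        filter_upwards [hindm.coeFn_toLp] with x e1 hx
        rw [e1]
        exact Set.indicator_of_notMem hx _
      have h0 : (inner ℂ (hwj.toLp _) (hindm.toLp _) : ℂ) = 0 := horthcl _ (hRB.2.1 hmem)
      have hint : Integrable (fun x => (inner ℂ ((⇑(hwj.toLp _)) x) ((⇑(hindm.toLp _)) x) : ℂ))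
          (volume : Measure (Fin d → ℝ)) := L2.integrable_inner _ _
      have h0' : ∫ x, RCLike.re (inner ℂ ((⇑(hwj.toLp _)) x) ((⇑(hindm.toLp _)) x) : ℂ)
          ∂(volume : Measure (Fin d → ℝ)) = 0 := by
        rw [integral_re hint, ← L2.inner_def, h0, map_zero]
      have hqeq : (fun x => RCLike.re (inner ℂ ((⇑(hwj.toLp _)) x) ((⇑(hindm.toLp _)) x) : ℂ))
          =ᵐ[(volume : Measure (Fin d → ℝ))]
          Ω.indicator (fun y => ‖dil ((a ^ (-j) : (Matrix (Fin d) (Fin d) ℝ)ˣ) :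
            Matrix (Fin d) (Fin d) ℝ) (⇑w) y‖ ^ 2) := by
        filter_upwards [hwj.coeFn_toLp, hindm.coeFn_toLp] with x e1 e2
        rw [e1, e2]
        by_cases hx : x ∈ Ω
        · rw [Set.indicator_of_mem hx, Set.indicator_of_mem hx]
          exact inner_self_eq_norm_sq _
        · rw [Set.indicator_of_notMem hx, Set.indicator_of_notMem hx, inner_zero_right, map_zero]
      have hqint : Integrable (Ω.indicator (fun y => ‖dil ((a ^ (-j) :
          (Matrix (Fin d) (Fin d) ℝ)ˣ) : Matrix (Fin d) (Fin d) ℝ) (⇑w) y‖ ^ 2))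
          (volume : Measure (Fin d → ℝ)) := (hint.re).congr hqeq
      have hq0 : Ω.indicator (fun y => ‖dil ((a ^ (-j) : (Matrix (Fin d) (Fin d) ℝ)ˣ) :
          Matrix (Fin d) (Fin d) ℝ) (⇑w) y‖ ^ 2) =ᵐ[(volume : Measure (Fin d → ℝ))] 0 := by
        refine (integral_eq_zero_iff_of_nonneg_ae ?_ hqint).mp ?_
        · exact Eventually.of_forall fun y => Set.indicator_nonneg (fun _ _ => sq_nonneg _) y
        · rw [← integral_congr_ae hqeq]
          exact h0'
      filter_upwards [hq0] with y hy hyΩ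
      have hy' : ‖dil ((a ^ (-j) : (Matrix (Fin d) (Fin d) ℝ)ˣ) :
          Matrix (Fin d) (Fin d) ℝ) (⇑w) y‖ ^ 2 = 0 := by
        have : Ω.indicator (fun y => ‖dil ((a ^ (-j) : (Matrix (Fin d) (Fin d) ℝ)ˣ) :
            Matrix (Fin d) (Fin d) ℝ) (⇑w) y‖ ^ 2) y = 0 := hy
        rwa [Set.indicator_of_mem hyΩ] at this
      simpa using hy' 
    -- combine over j : w vanishes a.e.
    have hzero : ∀ᵐ x ∂(volume : Measure (Fin d → ℝ)), (⇑w) x = 0 := by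
      have hall : ∀ᵐ x ∂(volume : Measure (Fin d → ℝ)), ∀ j : ℤ,
          ((a ^ j : (Matrix (Fin d) (Fin d) ℝ)ˣ) : Matrix (Fin d) (Fin d) ℝ).mulVec x ∈ Ω →
          (⇑w) x = 0 := by
        rw [ae_all_iff]
        intro j
        filter_upwards [ae_comp_mulVec (hdet j) (hWj j)] with x hx hmem
        have hwx : (⇑w) x = dil ((a ^ j : (Matrix (Fin d) (Fin d) ℝ)ˣ) :
            Matrix (Fin d) (Fin d) ℝ) (dil ((a ^ (-j) : (Matrix (Fin d) (Fin d) ℝ)ˣ) :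
            Matrix (Fin d) (Fin d) ℝ) (⇑w)) x := by
          rw [dil_dil (hpair j) (hpair' j)]
        rw [hwx]
        show _ • _ = (0 : ℂ)
        rw [hx hmem, smul_zero]
      have hcov : ∀ᵐ x ∂(volume : Measure (Fin d → ℝ)), x ∈ ⋃ j : ℤ,
          (((a ^ j : (Matrix (Fin d) (Fin d) ℝ)ˣ) : Matrix (Fin d) (Fin d) ℝ).mulVec '' Ω) := by
        have h1 := measure_eq_zero_iff_ae_notMem.mp hcover
        filter_upwards [h1] with x hx
        simpa using hx
      filter_upwards [hall, hcov] with x h1 h2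
      rw [Set.mem_iUnion] at h2
      obtain ⟨j0, hxS⟩ := h2
      have : ((a ^ (-j0) : (Matrix (Fin d) (Fin d) ℝ)ˣ) :
          Matrix (Fin d) (Fin d) ℝ).mulVec x ∈ Ω := by
        have he : ((a ^ (-j0) : (Matrix (Fin d) (Fin d) ℝ)ˣ) :
            Matrix (Fin d) (Fin d) ℝ).mulVec ⁻¹' Ω
            = ((a ^ j0 : (Matrix (Fin d) (Fin d) ℝ)ˣ) : Matrix (Fin d) (Fin d) ℝ).mulVec '' Ω :=
          preimage_eq_image (hpair' j0) (hpair j0) Ω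
        rw [← he] at hxS
        exact hxS
      exact h1 (-j0) this
    refine Lp.ext ?_
    filter_upwards [hzero, Lp.coeFn_zero ℂ 2 (volume : Measure (Fin d → ℝ))] with x h1 h2
    rw [h1, h2]
    rfl
  · -- frame bounds
    intro c
    set J : Finset ℤ := c.support.image Prod.fst with hJ
    have hsub : c.support ⊆ J ×ˢ c.support.image Prod.snd := by
      intro p hp
      rw [Finset.mem_product]
      exact ⟨Finset.mem_image_of_mem _ hp, Finset.mem_image_of_mem _ hp⟩
    have hrowsub : ∀ j : ℤ, ((c.curry) j).support ⊆ c.support.image Prod.snd := by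
      intro j k hk
      have h1 : c (j, k) ≠ 0 := by
        rw [← Finsupp.curry_apply]; exact Finsupp.mem_support_iff.mp hk
      exact Finset.mem_image_of_mem _ (Finsupp.mem_support_iff.mpr h1)
    have hrowzero : ∀ j k : ℤ, k ∉ ((c.curry) j).support → c (j, k) = 0 := by
      intro j k hk
      rw [← Finsupp.curry_apply]; exact Finsupp.notMem_support_iff.mp hk
    have hvec : ∑ p ∈ c.support, c p • MemLp.toLp _ (hDg p)
        = ∑ j ∈ J, ∑ k ∈ ((c.curry) j).support, c (j, k) • MemLp.toLp _ (hDg (j, k)) := by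
      rw [Finset.sum_subset hsub (fun p _ hp => by
        rw [Finsupp.notMem_support_iff.mp hp, zero_smul]), Finset.sum_product]
      exact Finset.sum_congr rfl fun j _ => (Finset.sum_subset (hrowsub j)
        (fun k _ hk => by rw [hrowzero j k hk, zero_smul])).symm
    have hsca : ∑ p ∈ c.support, ‖c p‖ ^ 2
        = ∑ j ∈ J, ∑ k ∈ ((c.curry) j).support, ‖c (j, k)‖ ^ 2 := by
      rw [Finset.sum_subset hsub (fun p _ hp => by
        rw [Finsupp.notMem_support_iff.mp hp]; simp), Finset.sum_product]
      exact Finset.sum_congr rfl fun j _ => (Finset.sum_subset (hrowsub j)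
        (fun k _ hk => by rw [hrowzero j k hk]; simp)).symm
    have hrow : ∀ j : ℤ,
        A * ∑ k ∈ ((c.curry) j).support, ‖c (j, k)‖ ^ 2 ≤
          ‖∑ k ∈ ((c.curry) j).support, c (j, k) • MemLp.toLp _ (hg k)‖ ^ 2 ∧
        ‖∑ k ∈ ((c.curry) j).support, c (j, k) • MemLp.toLp _ (hg k)‖ ^ 2 ≤
          B * ∑ k ∈ ((c.curry) j).support, ‖c (j, k)‖ ^ 2 := by
      intro j
      have h := hRB.2.2 ((c.curry) j)
      simpa only [Finsupp.curry_apply] using h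
    have hnorm : ‖∑ j ∈ J, ∑ k ∈ ((c.curry) j).support, c (j, k) • MemLp.toLp _ (hDg (j, k))‖ ^ 2
        = ∑ j ∈ J, ‖∑ k ∈ ((c.curry) j).support, c (j, k) • MemLp.toLp _ (hDg (j, k))‖ ^ 2 :=
      norm_sum_sq_orth J _ fun i _ j _ hne => hrowOrth i j hne _ _ _ _
    have hnormrow : ∀ j : ℤ,
        ‖∑ k ∈ ((c.curry) j).support, c (j, k) • MemLp.toLp _ (hDg (j, k))‖
          = ‖∑ k ∈ ((c.curry) j).support, c (j, k) • MemLp.toLp _ (hg k)‖ :=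
      fun j => hrowNorm j ((c.curry) j).support fun k => c (j, k)
    constructor
    · calc A * ∑ p ∈ c.support, ‖c p‖ ^ 2
          = ∑ j ∈ J, A * ∑ k ∈ ((c.curry) j).support, ‖c (j, k)‖ ^ 2 := by
            rw [hsca, Finset.mul_sum]
        _ ≤ ∑ j ∈ J, ‖∑ k ∈ ((c.curry) j).support, c (j, k) • MemLp.toLp _ (hDg (j, k))‖ ^ 2 :=
            Finset.sum_le_sum fun j _ => by rw [hnormrow j]; exact (hrow j).1
        _ = ‖∑ j ∈ J, ∑ k ∈ ((c.curry) j).support, c (j, k) • MemLp.toLp _ (hDg (j, k))‖ ^ 2 :=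
            hnorm.symm
        _ = ‖∑ p ∈ c.support, c p • MemLp.toLp _ (hDg p)‖ ^ 2 := by rw [hvec]
    · calc ‖∑ p ∈ c.support, c p • MemLp.toLp _ (hDg p)‖ ^ 2
          = ∑ j ∈ J, ‖∑ k ∈ ((c.curry) j).support, c (j, k) • MemLp.toLp _ (hDg (j, k))‖ ^ 2 := by
            rw [hvec, hnorm]
        _ ≤ ∑ j ∈ J, B * ∑ k ∈ ((c.curry) j).support, ‖c (j, k)‖ ^ 2 :=
            Finset.sum_le_sum fun j _ => by rw [hnormrow j]; exact (hrow j).2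
        _ = B * ∑ p ∈ c.support, ‖c p‖ ^ 2 := by rw [hsca, Finset.mul_sum]
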